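/- In the universal enveloping algebra of the Jacobi algebra G_2, the hatted elements b̂_k^+ = b_k^+ − (1/2)(a_k^+)² (k = 1,2) and ĉ^+ = c^+ − (1/2)a_1^+a_2^+ satisfy: [b̂_1^+, b̂_2^+] = [b̂_1^+, ĉ^+] = [b̂_2^+, ĉ^+] = 0, [b̂_2^+, d^+] = −ĉ^+, and [ĉ^+, d^+] = −(1/2)b̂_1^+. -/

import Mathlib

lemma mylie_mul {A : Type*} [Ring A] (x y z : A) : ⁅x, y*z⁆ = ⁅x,y⁆*z + y*⁅x,z⁆ := by
  simp only [Ring.lie_def]; noncomm_ring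

lemma mymul_lie {A : Type*} [Ring A] (x y z : A) : ⁅x*y, z⁆ = x*⁅y,z⁆ + ⁅x,z⁆*y := by
  simp only [Ring.lie_def]; noncomm_ring

/-- In the universal enveloping algebra of the Jacobi algebra 𝒢₂ (modelled as an
associative ℝ-algebra `A` containing elements a₁⁺, a₂⁺, b₁⁺, b₂⁺, c⁺, d⁺ satisfying
the bracket relations of 𝒢₂⁺, with ⁅x,y⁆ = x*y − y*x), the hatted elements
b̂ₖ⁺ = bₖ⁺ − (1/2)(aₖ⁺)² and ĉ⁺ = c⁺ − (1/2)a₁⁺a₂⁺ satisfy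
[b̂₁⁺,b̂₂⁺] = [b̂₁⁺,ĉ⁺] = [b̂₂⁺,ĉ⁺] = 0, [b̂₂⁺,d⁺] = −ĉ⁺, [ĉ⁺,d⁺] = −(1/2)b̂₁⁺. -/
theorem stmt_8 {A : Type*} [Ring A] [Algebra ℝ A]
    (a1 a2 b1 b2 c d : A)
    -- all brackets among a₁⁺, a₂⁺, b₁⁺, b₂⁺, c⁺ vanish
    (h12 : ⁅a1, a2⁆ = 0)
    (ha1b1 : ⁅a1, b1⁆ = 0) (ha1b2 : ⁅a1, b2⁆ = 0) (ha1c : ⁅a1, c⁆ = 0)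
    (ha2b1 : ⁅a2, b1⁆ = 0) (ha2b2 : ⁅a2, b2⁆ = 0) (ha2c : ⁅a2, c⁆ = 0)
    (hb1b2 : ⁅b1, b2⁆ = 0) (hb1c : ⁅b1, c⁆ = 0) (hb2c : ⁅b2, c⁆ = 0)
    -- brackets with d⁺
    (ha1d : ⁅a1, d⁆ = 0) (hb1d : ⁅b1, d⁆ = 0)
    (hb2d : ⁅b2, d⁆ = -c)
    (ha2d : ⁅a2, d⁆ = -((1/2 : ℝ) • a1))
    (hcd : ⁅c, d⁆ = -((1/2 : ℝ) • b1)) :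
    ⁅b1 - (1/2 : ℝ) • (a1 * a1), b2 - (1/2 : ℝ) • (a2 * a2)⁆ = 0 ∧
    ⁅b1 - (1/2 : ℝ) • (a1 * a1), c - (1/2 : ℝ) • (a1 * a2)⁆ = 0 ∧
    ⁅b2 - (1/2 : ℝ) • (a2 * a2), c - (1/2 : ℝ) • (a1 * a2)⁆ = 0 ∧
    ⁅b2 - (1/2 : ℝ) • (a2 * a2), d⁆ = -(c - (1/2 : ℝ) • (a1 * a2)) ∧
    ⁅c - (1/2 : ℝ) • (a1 * a2), d⁆ = -((1/2 : ℝ) • (b1 - (1/2 : ℝ) • (a1 * a1))) := by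
  letI : LieRing A := LieRing.ofAssociativeRing
  have hcomm : a2*a1 = a1*a2 := by
    have := h12; rw [Ring.lie_def, sub_eq_zero] at this; exact this.symm
  have h21 : ⁅a2, a1⁆ = 0 := by rw [← lie_skew, h12, neg_zero]
  have hb1a1 : ⁅b1, a1⁆ = 0 := by rw [← lie_skew, ha1b1, neg_zero]
  have hb1a2 : ⁅b1, a2⁆ = 0 := by rw [← lie_skew, ha2b1, neg_zero]
  have hb2a1 : ⁅b2, a1⁆ = 0 := by rw [← lie_skew, ha1b2, neg_zero]
  have hb2a2 : ⁅b2, a2⁆ = 0 := by rw [← lie_skew, ha2b2, neg_zero]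
  have hca1 : ⁅c, a1⁆ = 0 := by rw [← lie_skew, ha1c, neg_zero]
  have hca2 : ⁅c, a2⁆ = 0 := by rw [← lie_skew, ha2c, neg_zero]
  refine ⟨?_, ?_, ?_, ?_, ?_⟩ <;>
    simp only [sub_lie, lie_sub, smul_lie, lie_smul, mylie_mul, mymul_lie,
      h12, h21, ha1b1, ha1b2, ha1c, ha2b1, ha2b2, ha2c, hb1b2, hb1c, hb2c,
      lie_self, hcomm, ha1d, hb1d, hb2d, ha2d, hcd, hb1a1, hb1a2, hb2a1, hb2a2, hca1, hca2,
      zero_mul, mul_zero, add_zero, zero_add, smul_zero, sub_zero, zero_sub,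
      mul_neg, neg_mul, smul_neg, mul_smul_comm, smul_mul_assoc, smul_smul,
      smul_sub, neg_sub, sub_neg_eq_add, neg_neg] <;>
    try module
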